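/- Let x_1, ..., x_r be pairwise distinct nonzero elements of a field K, let M be the r×r Vandermonde matrix with (i,j)-entry x_j^{i-1}, and V = M·D where D = diag(x_1,...,x_r). Then V is invertible and the sum of the entries in the i-th row of V^{-1} equals (∏_{k≠i}(1-x_k)) / (x_i · ∏_{k≠i}(x_i - x_k)). -/

import Mathlib

open Finset Polynomial Matrix

lemma key_lagrange {K : Type} [Field K] (r : ℕ) (x : Fin r → K)
    (hinj : Function.Injective x) (n : ℕ) (hn : n < r) :
    ∑ j, x j ^ n * ((∏ k ∈ univ.erase j, (1 - x k)) / ∏ k ∈ univ.erase j, (x j - x k)) = 1 := by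
  have hvs : Set.InjOn x (univ : Finset (Fin r)) := fun a _ b _ h => hinj h
  have hdeg : (X ^ n : K[X]).degree < ((univ : Finset (Fin r)).card : ℕ) := by
    rw [Polynomial.degree_X_pow, Finset.card_univ, Fintype.card_fin]
    exact_mod_cast hn
  have h := Lagrange.eq_interpolate (f := (X ^ n : K[X])) hvs hdeg
  have h1 := congrArg (Polynomial.eval 1) h
  rw [Lagrange.interpolate_apply, Polynomial.eval_finset_sum] at h1
  simp only [Polynomial.eval_pow, Polynomial.eval_X, one_pow, Polynomial.eval_mul,
    Polynomial.eval_C] at h1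
  have hb : ∀ j : Fin r, Polynomial.eval 1 (Lagrange.basis univ x j) =
      (∏ k ∈ univ.erase j, (1 - x k)) / ∏ k ∈ univ.erase j, (x j - x k) := by
    intro j
    rw [Lagrange.basis, Polynomial.eval_prod]
    rw [div_eq_mul_inv, ← Finset.prod_inv_distrib, ← Finset.prod_mul_distrib]
    refine Finset.prod_congr rfl fun k _ => ?_
    simp [Lagrange.basisDivisor, mul_comm]
  calc ∑ j, x j ^ n * ((∏ k ∈ univ.erase j, (1 - x k)) / ∏ k ∈ univ.erase j, (x j - x k))
      = ∑ j, x j ^ n * Polynomial.eval 1 (Lagrange.basis univ x j) := by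
        refine Finset.sum_congr rfl fun j _ => by rw [hb]
    _ = 1 := h1.symm

theorem stmt_12 {K : Type} [Field K] (r : ℕ) (x : Fin r → K)
    (hinj : Function.Injective x) (h0 : ∀ i, x i ≠ 0) :
    IsUnit (Matrix.of fun i j : Fin r => x j ^ ((i : ℕ) + 1)) ∧
    ∀ i : Fin r,
      ∑ j, (Matrix.of fun i j : Fin r => x j ^ ((i : ℕ) + 1))⁻¹ i j =
        (∏ k ∈ Finset.univ.erase i, (1 - x k)) /
          (x i * ∏ k ∈ Finset.univ.erase i, (x i - x k)) := by
  set V : Matrix (Fin r) (Fin r) K := Matrix.of fun i j : Fin r => x j ^ ((i : ℕ) + 1) with hV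
  have hVeq : V = (Matrix.vandermonde x)ᵀ * Matrix.diagonal x := by
    ext i j
    simp [hV, Matrix.mul_diagonal, Matrix.vandermonde, pow_succ, mul_comm]
  have hdet : V.det ≠ 0 := by
    rw [hVeq, Matrix.det_mul, Matrix.det_transpose, Matrix.det_diagonal]
    exact mul_ne_zero (Matrix.det_vandermonde_ne_zero_iff.2 hinj)
      (Finset.prod_ne_zero_iff.2 fun i _ => h0 i)
  have hunit : IsUnit V := (Matrix.isUnit_iff_isUnit_det V).2 hdet.isUnit
  refine ⟨hunit, fun i => ?_⟩
  set c : Fin r → K := fun j =>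
    (∏ k ∈ univ.erase j, (1 - x k)) / (x j * ∏ k ∈ univ.erase j, (x j - x k)) with hc
  have hmv : V.mulVec c = fun _ => 1 := by
    funext n
    rw [Matrix.mulVec]
    have : ∀ j, V n j * c j =
        x j ^ (n : ℕ) * ((∏ k ∈ univ.erase j, (1 - x k)) / ∏ k ∈ univ.erase j, (x j - x k)) := by
      intro j
      have hprod : (∏ k ∈ univ.erase j, (x j - x k)) ≠ 0 := by
        refine Finset.prod_ne_zero_iff.2 fun k hk => sub_ne_zero.2 fun h => ?_
        exact (Finset.mem_erase.1 hk).1 (hinj h.symm)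
      rw [hV, hc]
      simp only [Matrix.of_apply]
      field_simp [h0 j]
      ring
    simp only [dotProduct, this]
    exact key_lagrange r x hinj n n.isLt
  have hinvmv : V⁻¹.mulVec (fun _ => (1 : K)) = c := by
    rw [← hmv, Matrix.mulVec_mulVec, Matrix.nonsing_inv_mul V hdet.isUnit, Matrix.one_mulVec]
  have := congrFun hinvmv i
  rw [Matrix.mulVec, dotProduct] at this
  simpa using this
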